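/- Let p be a sufficiently large prime and A ⊆ F_p with |A| ≥ 0.51p. Then for every integer m with 2 ≤ m ≤ |A| − 2, we have m*A = F_p. -/

import Mathlib

open Finset Polynomial

variable {F : Type*} [Field F] [DecidableEq F]


noncomputable def momW (S : Finset F) (a : F) : F := ∏ t ∈ S.erase a, (a - t)⁻¹

noncomputable def momM (S : Finset F) (r : ℕ) : F := ∑ a ∈ S, momW S a * a ^ r

lemma basis_coeff_top (S : Finset F) {a : F} (ha : a ∈ S) :
    (Lagrange.basis S id a).coeff (S.card - 1) = momW S a := by
  rw [Lagrange.basis_eq_prod_sub_inv_mul_nodal_div ha, ← Lagrange.nodal_erase_eq_nodal_div ha,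
    Polynomial.coeff_C_mul]
  have h1 : (Lagrange.nodal (S.erase a) id).natDegree = S.card - 1 := by
    rw [Lagrange.natDegree_nodal, card_erase_of_mem ha]
  have h2 : (Lagrange.nodal (S.erase a) id).Monic := Lagrange.nodal_monic
  rw [← h1, h2.coeff_natDegree, mul_one]
  · rfl

lemma moment_lemma (S : Finset F) (r : ℕ) (hr : r < S.card) :
    momM S r = if r = S.card - 1 then 1 else 0 := by
  have hinj : Set.InjOn (id : F → F) S := Function.injective_id.injOn
  have hdeg : (X ^ r : F[X]).degree < S.card := by
    rw [degree_X_pow]; exact_mod_cast hr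
  have h := Lagrange.eq_interpolate hinj hdeg
  have h2 := congrArg (fun q => Polynomial.coeff q (S.card - 1)) h
  simp only [Lagrange.interpolate_apply, Polynomial.finset_sum_coeff, Polynomial.coeff_C_mul,
    Polynomial.coeff_X_pow, Polynomial.eval_pow, Polynomial.eval_X] at h2
  rw [Finset.sum_congr rfl (fun a ha => by rw [basis_coeff_top S ha])] at h2
  · rw [momM, show (∑ a ∈ S, momW S a * a ^ r) = ∑ a ∈ S, id a ^ r * momW S a from
      Finset.sum_congr rfl fun a _ => mul_comm _ _, ← h2]
    simp only [eq_comm]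

lemma momM_self (S : Finset F) (d : ℕ) (hd : S.card = d + 1) : momM S d = 1 := by
  rw [moment_lemma S d (by omega), if_pos (by omega)]

lemma momM_zero (S : Finset F) (d r : ℕ) (hd : S.card = d + 1) (hr : r < d) : momM S r = 0 := by
  rw [moment_lemma S r (by omega), if_neg (by omega)]

lemma momM_mul_zero (S₁ S₂ : Finset F) (d₁ d₂ : ℕ) (h₁ : S₁.card = d₁ + 1)
    (h₂ : S₂.card = d₂ + 1) (α β : ℕ) (hs : α + β ≤ d₁ + d₂) (hne : ¬(α = d₁ ∧ β = d₂)) :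
    momM S₁ α * momM S₂ β = 0 := by
  rcases lt_trichotomy α d₁ with h | h | h
  · rw [momM_zero S₁ d₁ α h₁ h, zero_mul]
  · have : β < d₂ := by omega
    rw [momM_zero S₂ d₂ β h₂ this, mul_zero]
  · have : β < d₂ := by omega
    rw [momM_zero S₂ d₂ β h₂ this, mul_zero]

lemma inner_eval (S₁ S₂ : Finset F) (k : ℕ) :
    ∑ a ∈ S₁, ∑ b ∈ S₂, (momW S₁ a * momW S₂ b) * ((a - b) * (a + b) ^ k)
    = ∑ j ∈ Finset.range (k + 1),
        (k.choose j : F) * (momM S₁ (j+1) * momM S₂ (k-j) - momM S₁ j * momM S₂ (k-j+1)) := by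
  have lhs_eq : ∀ a ∈ S₁, ∀ b ∈ S₂, (momW S₁ a * momW S₂ b) * ((a - b) * (a + b) ^ k)
      = ∑ j ∈ Finset.range (k + 1),
          (k.choose j : F) * ((momW S₁ a * a ^ (j+1)) * (momW S₂ b * b ^ (k-j))
            - (momW S₁ a * a ^ j) * (momW S₂ b * b ^ (k-j+1))) := by
    intro a _ b _
    rw [add_pow, Finset.mul_sum, Finset.mul_sum]
    refine Finset.sum_congr rfl fun j _ => ?_
    ring
  rw [Finset.sum_congr rfl fun a ha => Finset.sum_congr rfl (lhs_eq a ha)]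
  rw [Finset.sum_congr rfl fun a _ => Finset.sum_comm, Finset.sum_comm]
  refine Finset.sum_congr rfl fun j _ => ?_
  rw [momM, momM, momM, momM, Finset.sum_mul_sum, Finset.sum_mul_sum, ← Finset.sum_sub_distrib,
    Finset.mul_sum]
  refine Finset.sum_congr rfl fun a _ => ?_
  rw [← Finset.sum_sub_distrib, Finset.mul_sum]

lemma inner_vanish (S₁ S₂ : Finset F) (d₁ d₂ : ℕ) (h₁ : S₁.card = d₁ + 1)
    (h₂ : S₂.card = d₂ + 1) (k : ℕ) (hk : k + 1 < d₁ + d₂) :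
    ∑ a ∈ S₁, ∑ b ∈ S₂, (momW S₁ a * momW S₂ b) * ((a - b) * (a + b) ^ k) = 0 := by
  rw [inner_eval]
  refine Finset.sum_eq_zero fun j hj => ?_
  rw [Finset.mem_range] at hj
  rw [momM_mul_zero S₁ S₂ d₁ d₂ h₁ h₂ (j+1) (k-j) (by omega) (by omega),
    momM_mul_zero S₁ S₂ d₁ d₂ h₁ h₂ j (k-j+1) (by omega) (by omega), sub_zero, mul_zero]

lemma inner_top (S₁ S₂ : Finset F) (d₁ d₂ : ℕ) (hd₁ : 1 ≤ d₁) (h₁ : S₁.card = d₁ + 1)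
    (h₂ : S₂.card = d₂ + 1) :
    ∑ a ∈ S₁, ∑ b ∈ S₂, (momW S₁ a * momW S₂ b) * ((a - b) * (a + b) ^ (d₁ + d₂ - 1))
    = ((d₁ + d₂ - 1).choose (d₁ - 1) : F) - ((d₁ + d₂ - 1).choose d₁ : F) := by
  set k := d₁ + d₂ - 1 with hk
  rw [inner_eval]
  have hsplit : ∀ j ∈ Finset.range (k+1),
      (k.choose j : F) * (momM S₁ (j+1) * momM S₂ (k-j) - momM S₁ j * momM S₂ (k-j+1))
      = (k.choose j : F) * (momM S₁ (j+1) * momM S₂ (k-j))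
        - (k.choose j : F) * (momM S₁ j * momM S₂ (k-j+1)) := fun j _ => by ring
  rw [Finset.sum_congr rfl hsplit, Finset.sum_sub_distrib]
  have e1 : ∑ j ∈ Finset.range (k+1), (k.choose j : F) * (momM S₁ (j+1) * momM S₂ (k-j))
      = (k.choose (d₁ - 1) : F) := by
    rw [Finset.sum_eq_single (d₁ - 1)]
    · rw [show d₁ - 1 + 1 = d₁ by omega, show k - (d₁ - 1) = d₂ by omega,
        momM_self S₁ d₁ h₁, momM_self S₂ d₂ h₂, mul_one, mul_one]
    · intro j hj hne
      rw [Finset.mem_range] at hj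
      rw [momM_mul_zero S₁ S₂ d₁ d₂ h₁ h₂ (j+1) (k-j) (by omega) (by omega), mul_zero]
    · intro h
      exact absurd (Finset.mem_range.mpr (by omega)) h
  have e2 : ∑ j ∈ Finset.range (k+1), (k.choose j : F) * (momM S₁ j * momM S₂ (k-j+1))
      = (k.choose d₁ : F) := by
    rcases Nat.eq_zero_or_pos d₂ with hd2 | hd2
    · have hchoose : k.choose d₁ = 0 := Nat.choose_eq_zero_of_lt (by omega)
      rw [hchoose, Nat.cast_zero]
      refine Finset.sum_eq_zero fun j hj => ?_
      rw [Finset.mem_range] at hj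
      rw [momM_mul_zero S₁ S₂ d₁ d₂ h₁ h₂ j (k-j+1) (by omega) (by omega), mul_zero]
    · rw [Finset.sum_eq_single d₁]
      · rw [show k - d₁ + 1 = d₂ by omega, momM_self S₁ d₁ h₁, momM_self S₂ d₂ h₂,
          mul_one, mul_one]
      · intro j hj hne
        rw [Finset.mem_range] at hj
        rw [momM_mul_zero S₁ S₂ d₁ d₂ h₁ h₂ j (k-j+1) (by omega) (by omega), mul_zero]
      · intro h
        exact absurd (Finset.mem_range.mpr (by omega)) h
  rw [e1, e2]

lemma key_computation (S₁ S₂ T : Finset F) (d₁ d₂ : ℕ) (hd₁ : 1 ≤ d₁)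
    (h₁ : S₁.card = d₁ + 1) (h₂ : S₂.card = d₂ + 1) (hT : T.card + 1 = d₁ + d₂)
    (hvan : ∀ a ∈ S₁, ∀ b ∈ S₂, (a - b) * ∏ t ∈ T, (a + b - t) = 0) :
    ((d₁ + d₂ - 1).choose (d₁ - 1) : F) = ((d₁ + d₂ - 1).choose d₁ : F) := by
  have hzero : (0 : F) = ∑ a ∈ S₁, ∑ b ∈ S₂,
      (momW S₁ a * momW S₂ b) * ((a - b) * ∏ t ∈ T, (a + b - t)) := by
    symm
    refine Finset.sum_eq_zero fun a ha => Finset.sum_eq_zero fun b hb => ?_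
    rw [hvan a ha b hb, mul_zero]
  have hexp : ∀ a ∈ S₁, ∀ b ∈ S₂,
      (momW S₁ a * momW S₂ b) * ((a - b) * ∏ t ∈ T, (a + b - t))
      = ∑ U ∈ T.powerset, (∏ t ∈ T \ U, (-t)) *
          ((momW S₁ a * momW S₂ b) * ((a - b) * (a + b) ^ U.card)) := by
    intro a _ b _
    have : ∏ t ∈ T, (a + b - t) = ∑ U ∈ T.powerset, (a+b) ^ U.card * ∏ t ∈ T \ U, (-t) := by
      rw [show (fun t => a + b - t) = (fun t => (a + b) + (-t)) from funext fun t => by ring,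
        Finset.prod_add]
      exact Finset.sum_congr rfl fun U _ => by rw [Finset.prod_const]
    rw [this, Finset.mul_sum, Finset.mul_sum]
    refine Finset.sum_congr rfl fun U _ => ?_
    ring
  rw [Finset.sum_congr rfl (fun a ha => Finset.sum_congr rfl (hexp a ha))] at hzero
  rw [Finset.sum_congr rfl (fun a (_ : a ∈ S₁) => Finset.sum_comm), Finset.sum_comm] at hzero
  simp only [← Finset.mul_sum] at hzero
  have hsplit : ∀ U ∈ T.powerset, (∏ t ∈ T \ U, (-t)) *
      (∑ a ∈ S₁, ∑ b ∈ S₂, (momW S₁ a * momW S₂ b) * ((a - b) * (a + b) ^ U.card))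
      = if U = T then ((d₁ + d₂ - 1).choose (d₁ - 1) : F) - ((d₁ + d₂ - 1).choose d₁ : F)
        else 0 := by
    intro U hU
    rw [Finset.mem_powerset] at hU
    by_cases hUT : U = T
    · subst hUT
      rw [if_pos rfl, Finset.sdiff_self, Finset.prod_empty, one_mul,
        show U.card = d₁ + d₂ - 1 by omega, inner_top S₁ S₂ d₁ d₂ hd₁ h₁ h₂]
    · rw [if_neg hUT]
      have hlt : U.card < T.card := Finset.card_lt_card (lt_of_le_of_ne hU hUT)
      rw [inner_vanish S₁ S₂ d₁ d₂ h₁ h₂ U.card (by omega), mul_zero]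
  rw [Finset.sum_congr rfl hsplit, Finset.sum_ite_eq' T.powerset T
    (fun _ => ((d₁ + d₂ - 1).choose (d₁ - 1) : F) - ((d₁ + d₂ - 1).choose d₁ : F)),
    if_pos (Finset.mem_powerset_self T)] at hzero
  have := sub_eq_zero.mp hzero.symm
  exact this

def pairSums {p : ℕ} (C : Finset (ZMod p)) : Finset (ZMod p) :=
  C.offDiag.image fun q => q.1 + q.2

lemma pairSums_mono {p : ℕ} {C D : Finset (ZMod p)} (h : C ⊆ D) : pairSums C ⊆ pairSums D :=
  Finset.image_subset_image (Finset.offDiag_mono h)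

lemma mem_pairSums {p : ℕ} {C : Finset (ZMod p)} {a b : ZMod p} (ha : a ∈ C) (hb : b ∈ C)
    (hab : a ≠ b) : a + b ∈ pairSums C :=
  Finset.mem_image.mpr ⟨(a, b), Finset.mem_offDiag.mpr ⟨ha, hb, hab⟩, rfl⟩

lemma EH_aux {p : ℕ} (hp : p.Prime) (C : Finset (ZMod p)) (h2 : 2 ≤ C.card)
    (hcp : 2 * C.card - 3 ≤ p) : 2 * C.card - 3 ≤ (pairSums C).card := by
  haveI : Fact p.Prime := ⟨hp⟩
  by_contra hlt
  push_neg at hlt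
  have hPcard : (pairSums C).card ≤ 2 * C.card - 4 := by omega
  have hcardF : Fintype.card (ZMod p) = p := ZMod.card p
  have hle : 2 * C.card - 4 ≤ Fintype.card (ZMod p) := by rw [hcardF]; omega
  obtain ⟨T, hPT, hTcard⟩ := Finset.exists_superset_card_eq hPcard hle
  obtain ⟨x₀, hx₀⟩ : C.Nonempty := Finset.card_pos.mp (by omega)
  have h₁ : C.card = (C.card - 1) + 1 := by omega
  have h₂ : (C.erase x₀).card = (C.card - 2) + 1 := by
    rw [Finset.card_erase_of_mem hx₀]; omega
  have hT : T.card + 1 = (C.card - 1) + (C.card - 2) := by omega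
  have hvan : ∀ a ∈ C, ∀ b ∈ C.erase x₀, (a - b) * ∏ t ∈ T, (a + b - t) = 0 := by
    intro a ha b hb
    rcases eq_or_ne a b with rfl | hab
    · rw [sub_self, zero_mul]
    · have hmem : a + b ∈ T := hPT (mem_pairSums ha (Finset.mem_of_mem_erase hb) hab)
      rw [Finset.prod_eq_zero hmem (by ring), mul_zero]
  have hkey := key_computation C (C.erase x₀) T (C.card - 1) (C.card - 2) (by omega) h₁ h₂ hT hvan
  set n := (C.card - 1) + (C.card - 2) - 1 with hn
  have hid : n.choose ((C.card - 2) + 1) * ((C.card - 2) + 1)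
      = n.choose (C.card - 2) * (n - (C.card - 2)) := Nat.choose_succ_right_eq n (C.card - 2)
  have hsub : n - (C.card - 2) = C.card - 2 := by omega
  rw [hsub] at hid
  rw [show (C.card - 1) - 1 = C.card - 2 by omega,
    show C.card - 1 = (C.card - 2) + 1 by omega] at hkey
  have hcast := congrArg (fun t : ℕ => (t : ZMod p)) hid
  push_cast at hcast
  rw [← hkey] at hcast
  have hz2 : (n.choose (C.card - 2) : ZMod p) = 0 := by linear_combination hcast
  have hdvd : p ∣ n.choose (C.card - 2) := (ZMod.natCast_eq_zero_iff _ _).mp hz2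
  have hfac : n.choose (C.card - 2) * (C.card - 2).factorial * (n - (C.card - 2)).factorial
      = n.factorial := Nat.choose_mul_factorial_mul_factorial (by omega)
  have hpn : p ∣ n.factorial := hfac ▸ Dvd.dvd.mul_right (Dvd.dvd.mul_right hdvd _) _
  have hple := (Nat.Prime.dvd_factorial hp).mp hpn
  omega

lemma EH {p : ℕ} (hp : p.Prime) (h3 : 3 ≤ p) (C : Finset (ZMod p)) (h2 : 2 ≤ C.card) :
    min p (2 * C.card - 3) ≤ (pairSums C).card := by
  rcases le_or_gt (2 * C.card - 3) p with h | h
  · exact le_trans (min_le_right _ _) (EH_aux hp C h2 h)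
  · have hodd : p % 2 = 1 := Nat.odd_iff.mp (hp.odd_of_ne_two (by omega))
    have hc' : (p + 3) / 2 ≤ C.card := by omega
    obtain ⟨C', hC'sub, hC'card⟩ := Finset.exists_subset_card_eq hc'
    have h2' : 2 ≤ C'.card := by omega
    have hEH := EH_aux hp C' h2' (by omega)
    have hmono := Finset.card_le_card (pairSums_mono hC'sub)
    exact le_trans (min_le_left _ _) (by omega)

theorem mStar_eq_univ_of_dense :
    ∃ p₀ : ℕ, ∀ p : ℕ, p₀ ≤ p → p.Prime → ∀ A : Finset (ZMod p),
      (0.51 : ℝ) * p ≤ (A.card : ℝ) →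
      ∀ m : ℕ, 2 ≤ m → m + 2 ≤ A.card →
      ∀ y : ZMod p, ∃ B ⊆ A, B.card = m ∧ B.sum id = y := by
  use 1000
  intro p hp₀ hp A hA m hm2 hmA y
  haveI : Fact p.Prime := ⟨hp⟩
  have h3 : 3 ≤ p := by omega
  have hcard : 51 * p ≤ 100 * A.card := by
    have h1 : (51 : ℝ) * p ≤ 100 * A.card := by nlinarith [hA]
    exact_mod_cast h1
  have hcardF : Fintype.card (ZMod p) = p := ZMod.card p
  have hAle : A.card ≤ p := by
    have h := Finset.card_le_univ A
    rwa [hcardF] at h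
  obtain ⟨B₀, hB₀A, hB₀card⟩ := Finset.exists_subset_card_eq (show m ≤ A.card by omega)
  set C := A \ B₀ with hC
  have hCcard : C.card = A.card - m := by rw [hC, Finset.card_sdiff_of_subset hB₀A, hB₀card]
  set t := y - B₀.sum id with ht
  set X := pairSums C with hX
  set Y := (pairSums B₀).image (fun v => t + v) with hY
  have hXcard : min p (2 * (A.card - m) - 3) ≤ X.card := by
    have h := EH hp h3 C (by omega)
    rwa [hCcard] at h
  have hYcard : min p (2 * m - 3) ≤ Y.card := by
    rw [hY, Finset.card_image_of_injective _ (add_right_injective t), ← hB₀card]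
    exact EH hp h3 B₀ (by omega)
  have hXY : p + 1 ≤ X.card + Y.card := by
    have h6 : p + 7 ≤ 2 * (A.card - m) - 3 + (2 * m - 3) := by omega
    omega
  have hinter : (X ∩ Y).Nonempty := by
    rw [← Finset.card_pos]
    have hunion : (X ∪ Y).card ≤ p := by
      have h := Finset.card_le_univ (X ∪ Y)
      rwa [hcardF] at h
    have := Finset.card_union_add_card_inter X Y
    omega
  obtain ⟨u, hu⟩ := hinter
  rw [Finset.mem_inter] at hu
  obtain ⟨⟨⟨c₁, c₂⟩, hcmem, hcsum⟩, huY⟩ : (∃ q ∈ C.offDiag, q.1 + q.2 = u) ∧ u ∈ Y :=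
    ⟨Finset.mem_image.mp hu.1, hu.2⟩
  obtain ⟨v, hvmem, hvsum⟩ := Finset.mem_image.mp huY
  obtain ⟨⟨b₁, b₂⟩, hbmem, hbsum⟩ := Finset.mem_image.mp hvmem
  rw [Finset.mem_offDiag] at hcmem hbmem
  obtain ⟨hc₁, hc₂, hcne⟩ := hcmem
  obtain ⟨hb₁, hb₂, hbne⟩ := hbmem
  have hc₁A : c₁ ∈ A := (Finset.mem_sdiff.mp hc₁).1
  have hc₂A : c₂ ∈ A := (Finset.mem_sdiff.mp hc₂).1
  have hc₁B : c₁ ∉ B₀ := (Finset.mem_sdiff.mp hc₁).2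
  have hc₂B : c₂ ∉ B₀ := (Finset.mem_sdiff.mp hc₂).2
  set E := (B₀.erase b₁).erase b₂ with hE
  have hb₂e : b₂ ∈ B₀.erase b₁ := Finset.mem_erase.mpr ⟨fun h => hbne h.symm, hb₂⟩
  have hEcard : E.card = m - 2 := by
    rw [hE, Finset.card_erase_of_mem hb₂e, Finset.card_erase_of_mem hb₁, hB₀card]
    omega
  have hEB₀ : E ⊆ B₀ := Finset.Subset.trans (Finset.erase_subset _ _) (Finset.erase_subset _ _)
  have hc₂E : c₂ ∉ insert c₂ E → False := fun h => h (Finset.mem_insert_self _ _)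
  refine ⟨insert c₁ (insert c₂ E), ?_, ?_, ?_⟩
  · intro x hx
    rcases Finset.mem_insert.mp hx with rfl | hx
    · exact hc₁A
    rcases Finset.mem_insert.mp hx with rfl | hx
    · exact hc₂A
    · exact hB₀A (hEB₀ hx)
  · rw [Finset.card_insert_of_notMem, Finset.card_insert_of_notMem, hEcard]
    · omega
    · exact fun h => hc₂B (hEB₀ h)
    · intro h
      rcases Finset.mem_insert.mp h with rfl | h
      · exact hcne rfl
      · exact hc₁B (hEB₀ h)
  · rw [Finset.sum_insert, Finset.sum_insert]
    · have hsE : E.sum id + id b₂ + id b₁ = B₀.sum id := by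
        rw [Finset.sum_erase_add (B₀.erase b₁) id hb₂e, Finset.sum_erase_add B₀ id hb₁]
      have hcs : c₁ + c₂ = t + (b₁ + b₂) := by rw [hcsum, ← hvsum, ← hbsum]
      rw [ht] at hcs
      simp only [id_eq, Function.id_def] at hsE hcs ⊢
      linear_combination hcs + hsE
    · exact fun h => hc₂B (hEB₀ h)
    · intro h
      rcases Finset.mem_insert.mp h with rfl | h
      · exact hcne rfl
      · exact hc₁B (hEB₀ h)
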